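/- The derivation D := D_{+,1} − D_{−,1} − D_{+,0} + D_{−,0} on 𝒜 reproduces the complexified Ablowitz–Ladik equation: D(r_n) = r_{n+1} − 2r_n + r_{n−1} − r_n q_n (r_{n+1} + r_{n−1}) and D(q_n) = −q_{n+1} + 2q_n − q_{n−1} + r_n q_n (q_{n+1} + q_{n−1}). -/

import Mathlib

noncomputable section

open PowerSeries

open scoped Classical

/-- The polynomial ring `𝒜 = ℚ[q_{n+i}, r_{n+i} : i ∈ ℤ]`; the variable `(true, i)`
is `q_{n+i}` and `(false, i)` is `r_{n+i}`. -/
abbrev A : Type := MvPolynomial (Bool × ℤ) ℚ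

/-- The generator `q_{n+i}`. -/
def qv (i : ℤ) : A := MvPolynomial.X (true, i)

/-- The generator `r_{n+i}`. -/
def rv (i : ℤ) : A := MvPolynomial.X (false, i)

/-- The shift operator `Λ`, determined by `Λ(q_{n+i}) = q_{n+i+1}`, `Λ(r_{n+i}) = r_{n+i+1}`. -/
def Lam : A →+* A :=
  (MvPolynomial.rename (fun bi : Bool × ℤ => (bi.1, bi.2 + 1))).toRingHom

/-- Formal power series over `𝒜` (in `λ`, or in `λ⁻¹`, depending on the context). -/
abbrev S : Type := PowerSeries A

/-- 2×2 matrices over `𝒜[[λ]]` (resp. `𝒜[[λ⁻¹]]`). -/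
abbrev M2 : Type := Matrix (Fin 2) (Fin 2) S

/-- `Λ` acting coefficientwise on formal power series. -/
def LamS : S →+* S := PowerSeries.map Lam

/-- The Lax matrix `U(λ) = ((λ, r_n), (λ q_n, 1))`, as a matrix over `𝒜[[λ]]`. -/
def Umat : M2 :=
  !![PowerSeries.X, PowerSeries.C (rv 0);
     PowerSeries.X * PowerSeries.C (qv 0), 1]

/-- The Lax matrix multiplied by `λ⁻¹`, i.e. `λ⁻¹·U(λ) = ((1, λ⁻¹ r_n), (q_n, λ⁻¹))`,
as a matrix over `𝒜[[λ⁻¹]]` (here `PowerSeries.X` stands for `λ⁻¹`). -/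
def UmatInf : M2 :=
  !![1, PowerSeries.X * PowerSeries.C (rv 0);
     PowerSeries.C (qv 0), PowerSeries.X]

/-- `R` is the basic matrix resolvent at `λ = 0`: it is a matrix resolvent
(`Λ(R(λ))·U(λ) = U(λ)·R(λ)`), `R ≡ ((0, r_{n-1}), (0, 1)) mod λ`, `tr R = 1`, `det R = 0`. -/
def IsResMinus (R : M2) : Prop :=
  R.map (⇑LamS) * Umat = Umat * R ∧
  R.map (⇑(PowerSeries.constantCoeff (R := A))) = !![0, rv (-1); 0, 1] ∧
  R 0 0 + R 1 1 = 1 ∧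
  R 0 0 * R 1 1 - R 0 1 * R 1 0 = 0

/-- `R` is the basic matrix resolvent at `λ = ∞`: it is a matrix resolvent
(the equation `Λ(R(λ))·U(λ) = U(λ)·R(λ)` is multiplied by `λ⁻¹`, so that it takes place
in matrices over `𝒜[[λ⁻¹]]`), `R ≡ ((1, 0), (q_{n-1}, 0)) mod λ⁻¹`, `tr R = 1`, `det R = 0`. -/
def IsResPlus (R : M2) : Prop :=
  R.map (⇑LamS) * UmatInf = UmatInf * R ∧
  R.map (⇑(PowerSeries.constantCoeff (R := A))) = !![1, 0; qv (-1), 0] ∧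
  R 0 0 + R 1 1 = 1 ∧
  R 0 0 * R 1 1 - R 0 1 * R 1 0 = 0

/-- The `p`-th coefficient matrix of a matrix of power series. -/
def coefM (R : M2) (p : ℕ) : Matrix (Fin 2) (Fin 2) A :=
  Matrix.of fun i j => PowerSeries.coeff p (R i j)

/-- The coefficients `a_{α,p}` (with `α = + ↔ true`, `α = - ↔ false`). -/
def aC (Rm Rp : M2) (α : Bool) (p : ℕ) : A :=
  if α then coefM Rp p 0 0 - (if p = 0 then 1 else 0) else coefM Rm p 0 0

/-- The coefficients `b_{α,p}`. -/
def bC (Rm Rp : M2) (α : Bool) (p : ℕ) : A :=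
  if α then coefM Rp p 0 1 else coefM Rm p 0 1

/-- The coefficients `c_{α,p}`. -/
def cC (Rm Rp : M2) (α : Bool) (p : ℕ) : A :=
  if α then coefM Rp p 1 0 else coefM Rm p 1 0

/-- `U(λ) = U0 + λ·U1`: constant part. -/
def U0 : Matrix (Fin 2) (Fin 2) A := !![0, rv 0; 0, 1]

/-- `U(λ) = U0 + λ·U1`: linear part. -/
def U1 : Matrix (Fin 2) (Fin 2) A := !![1, 0; qv 0, 0]

/-- The coefficient at `λ^m` (`m ∈ ℤ`) of the Laurent-polynomial matrix `V_{α,p}(λ)`,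
where `V_{-,p}(λ) = (λ^{-p}R_-(λ))_{≤0} - ((a_{-,p}, b_{-,p}), (0,0))` and
`V_{+,p}(λ) = (λ^{p}R_+(λ))_{≥0} - ((0,0), (c_{+,p}, -a_{+,p}))`. -/
def Vc (Rm Rp : M2) (α : Bool) (p : ℕ) (m : ℤ) : Matrix (Fin 2) (Fin 2) A :=
  if α then
    (if 0 ≤ m ∧ m ≤ (p : ℤ) then coefM Rp ((p : ℤ) - m).toNat else 0)
      - (if m = 0 then !![0, 0; cC Rm Rp true p, - aC Rm Rp true p] else 0)
  else
    (if -(p : ℤ) ≤ m ∧ m ≤ 0 then coefM Rm (m + (p : ℤ)).toNat else 0)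
      - (if m = 0 then !![aC Rm Rp false p, bC Rm Rp false p; 0, 0] else 0)

/-- The coefficient at `λ^m` (`m ∈ ℤ`) of `D(U(λ))`, where `D(λ) = 0`, i.e. of
`((0, D r_n), (λ·D q_n, 0))`. -/
def DUcoef (D : Derivation ℚ A A) (m : ℤ) : Matrix (Fin 2) (Fin 2) A :=
  if m = 0 then !![0, D (rv 0); 0, 0]
  else if m = 1 then !![0, 0; D (qv 0), 0] else 0

/-- The equation `D(U(λ)) = Λ(V_{α,p}(λ))·U(λ) - U(λ)·V_{α,p}(λ)`, written coefficientwise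
in powers of `λ` (both sides are Laurent polynomials in `λ` with matrix coefficients). -/
def DUeq (Rm Rp : M2) (α : Bool) (p : ℕ) (D : Derivation ℚ A A) : Prop :=
  ∀ m : ℤ,
    DUcoef D m =
      (Vc Rm Rp α p m).map Lam * U0 + (Vc Rm Rp α p (m - 1)).map Lam * U1
        - U0 * Vc Rm Rp α p m - U1 * Vc Rm Rp α p (m - 1)

/-- `D` commutes with the shift `Λ`. -/
def CommutesLam (D : Derivation ℚ A A) : Prop := ∀ f : A, D (Lam f) = Lam (D f)

/-- The action of `D_{α,p}` on the generators `r_n`, `q_n`. -/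
def GenEqs (Rm Rp : M2) (α : Bool) (p : ℕ) (D : Derivation ℚ A A) : Prop :=
  if α then
    D (rv 0) = rv 0 * Lam (aC Rm Rp true p) + Lam (bC Rm Rp true p)
        + (if p = 0 then rv 0 else 0) ∧
    D (qv 0) = qv 0 * Lam (aC Rm Rp true p) - Lam (cC Rm Rp true p)
  else
    D (rv 0) = -(rv 0 * Lam (aC Rm Rp false p)) - Lam (bC Rm Rp false p) ∧
    D (qv 0) = -(qv 0 * Lam (aC Rm Rp false p)) + Lam (cC Rm Rp false p)
        + (if p = 0 then qv 0 else 0)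

/-- `D` is the Ablowitz–Ladik derivation `D_{α,p}`: the unique derivation of `𝒜`
commuting with `Λ` and acting on the generators by the prescribed formulas. -/
def IsALDeriv (Rm Rp : M2) (α : Bool) (p : ℕ) (D : Derivation ℚ A A) : Prop :=
  CommutesLam D ∧ GenEqs Rm Rp α p D

/-- The coefficient at `λ^m` (`m ∈ ℤ`) of `R_α(λ)`: `R_-(λ)` has only nonnegative powers,
`R_+(λ)` only nonpositive ones. -/
def RExt (Rm Rp : M2) (α : Bool) (m : ℤ) : Matrix (Fin 2) (Fin 2) A :=
  if α then (if m ≤ 0 then coefM Rp (-m).toNat else 0)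
  else (if 0 ≤ m then coefM Rm m.toNat else 0)

/-- Extension of a double sequence by zero to integer indices. -/
def OmExt (Om : ℕ → ℕ → A) (m k : ℤ) : A :=
  if 0 ≤ m ∧ 0 ≤ k then Om m.toNat k.toNat else 0

/-- The generating identity `tr(R_+(λ)R_+(μ)) - 1 = (λ-μ)² Σ_{p,q≥0} Ω_{p,q} λ^{-p-1} μ^{-q-1}`,
written coefficientwise: `m, k` are the exponents of `λ⁻¹, μ⁻¹`. -/
def GenPP (Rp : M2) (Om : ℕ → ℕ → A) : Prop :=
  ∀ m k : ℤ,
    (if 0 ≤ m ∧ 0 ≤ k then (coefM Rp m.toNat * coefM Rp k.toNat).trace else 0)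
      - (if m = 0 ∧ k = 0 then 1 else 0)
    = OmExt Om (m + 1) (k - 1) - 2 * OmExt Om m k + OmExt Om (m - 1) (k + 1)

/-- The generating identity `tr(R_-(λ)R_-(μ)) - 1 = (λ-μ)² Σ_{p,q≥0} Ω_{p,q} λ^{p-1} μ^{q-1}`,
written coefficientwise: `m, k` are the exponents of `λ, μ`. -/
def GenMM (Rm : M2) (Om : ℕ → ℕ → A) : Prop :=
  ∀ m k : ℤ,
    (if 0 ≤ m ∧ 0 ≤ k then (coefM Rm m.toNat * coefM Rm k.toNat).trace else 0)
      - (if m = 0 ∧ k = 0 then 1 else 0)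
    = OmExt Om (m - 1) (k + 1) - 2 * OmExt Om m k + OmExt Om (m + 1) (k - 1)

/-- The generating identity
`Σ_{p,q≥0} Ω_{p,q} λ^{-p-1} μ^{q-1} = -tr(R_+(λ)R_-(μ))·Σ_{m≥1} m μ^{m-1} λ^{-m-1} + λ^{-2}`
(the expansion of `-tr(R_+(λ)R_-(μ))/(λ-μ)² + 1/λ²` for `|λ| > |μ|`), together with the
vanishing `Ω_{0,q} = Ω_{p,0} = 0`; `a` is the exponent of `λ⁻¹` and `b` the one of `μ`. -/
def GenPM (Rm Rp : M2) (Om : ℕ → ℕ → A) : Prop :=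
  (∀ q, Om 0 q = 0) ∧ (∀ p, Om p 0 = 0) ∧
  ∀ a b : ℤ,
    OmExt Om (a - 1) (b + 1)
      = -(∑ m ∈ Finset.Icc (1 : ℤ) (min (a - 1) (b + 1)),
            m • (coefM Rp (a - m - 1).toNat * coefM Rm (b - m + 1).toNat).trace)
        + (if a = 2 ∧ b = 0 then 1 else 0)

/-- The generating identity
`Σ_{p,q≥0} Ω_{q,p} λ^{p-1} μ^{-q-1} = -tr(R_-(λ)R_+(μ))·Σ_{m≥1} m λ^{m-1} μ^{-m-1} + μ^{-2}`
(the expansion of `-tr(R_-(λ)R_+(μ))/(λ-μ)² + 1/μ²` for `|μ| > |λ|`);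
`c` is the exponent of `λ` and `d` the one of `μ⁻¹`. -/
def GenMP (Rm Rp : M2) (Om : ℕ → ℕ → A) : Prop :=
  ∀ c d : ℤ,
    OmExt Om (d - 1) (c + 1)
      = -(∑ m ∈ Finset.Icc (1 : ℤ) (min (c + 1) (d - 1)),
            m • (coefM Rm (c - m + 1).toNat * coefM Rp (d - m - 1).toNat).trace)
        + (if c = 0 ∧ d = 2 then 1 else 0)

/-- `Om α β p q` is the full tau-structure family `Ω_{α,p;β,q}`
(with `α = + ↔ true`), as defined by the four generating identities,
where `Ω_{-,p;+,q} := Ω_{+,q;-,p}`. -/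
def OmFam (Rm Rp : M2) (Om : Bool → Bool → ℕ → ℕ → A) : Prop :=
  GenPP Rp (Om true true) ∧ GenMM Rm (Om false false) ∧ GenPM Rm Rp (Om true false) ∧
  ∀ p q, Om false true p q = Om true false q p

/-- The multipoint quantities `Ω_{α_1,p_1;…;α_m,p_m}` (`m = k + 2` points), defined
inductively from the two-point family by applying the derivations `D_{α,p}`. -/
def OmK (Om : Bool → Bool → ℕ → ℕ → A) (D : Bool → ℕ → Derivation ℚ A A) :
    (k : ℕ) → (Fin (k + 2) → Bool) → (Fin (k + 2) → ℕ) → A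
  | 0, β, i => Om (β 0) (β 1) (i 0) (i 1)
  | k + 1, β, i =>
      D (β (Fin.last (k + 2))) (i (Fin.last (k + 2)))
        (OmK Om D k (fun j => β j.castSucc) (fun j => i j.castSucc))

/-- Multiplication of a formal series in `λ_1, …, λ_n` with exponents in `ℤⁿ`
(given by its coefficient function `F`) by a polynomial `P`, coefficientwise. -/
def mulPoly {n : ℕ} (P : MvPolynomial (Fin n) A) (F : (Fin n → ℤ) → A)
    (m : Fin n → ℤ) : A :=
  ∑ d ∈ P.support, P.coeff d * F (fun j => m j - d j)

/-- The Vandermonde-type polynomial `∏_{i<j} (λ_i - λ_j)`. -/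
def vandP (n : ℕ) : MvPolynomial (Fin n) A :=
  ∏ p ∈ Finset.univ.filter (fun p : Fin n × Fin n => p.1 < p.2),
    (MvPolynomial.X p.1 - MvPolynomial.X p.2)

/-- `i` and `j` are cyclically adjacent for `σ`, i.e. `{i,j} = {σ(t), σ(t+1)}` for some `t`. -/
def cycAdj {n : ℕ} [NeZero n] (σ : Equiv.Perm (Fin n)) (i j : Fin n) : Prop :=
  ∃ t : Fin n, (σ t = i ∧ σ (t + 1) = j) ∨ (σ t = j ∧ σ (t + 1) = i)

/-- The polynomial `∏_{i<j} (λ_i - λ_j) / ∏_t (λ_{σ(t)} - λ_{σ(t+1)})`, up to the sign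
`permSign σ`: the product of `(λ_i - λ_j)` over ordered non-cyclically-adjacent pairs. -/
def Qpoly {n : ℕ} [NeZero n] (σ : Equiv.Perm (Fin n)) : MvPolynomial (Fin n) A :=
  ∏ p ∈ Finset.univ.filter
      (fun p : Fin n × Fin n => p.1 < p.2 ∧ ¬ cycAdj σ p.1 p.2),
    (MvPolynomial.X p.1 - MvPolynomial.X p.2)

/-- The sign relating `∏_t (λ_{σ(t)} - λ_{σ(t+1)})` with the corresponding product over
ordered pairs. -/
def permSign {n : ℕ} [NeZero n] (σ : Equiv.Perm (Fin n)) : A :=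
  ∏ t : Fin n, (if σ (t + 1) < σ t then (-1 : A) else 1)

/-- The coefficient function of `tr(R_{α_{σ(1)}}(λ_{σ(1)}) ⋯ R_{α_{σ(n)}}(λ_{σ(n)}))`. -/
def Gfun (Rm Rp : M2) {n : ℕ} (β : Fin n → Bool) (σ : Equiv.Perm (Fin n))
    (m : Fin n → ℤ) : A :=
  (List.ofFn (fun j : Fin n => RExt Rm Rp (β (σ j)) (m (σ j)))).prod.trace

/-- The coefficient function of the generating series
`Σ_{i_1,…,i_m ≥ 0} Ω_{α_1,i_1;…;α_m,i_m} / (λ_1^{α_1 i_1 + 1} ⋯ λ_m^{α_m i_m + 1})`. -/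
def lhsF (Om : Bool → Bool → ℕ → ℕ → A) (D : Bool → ℕ → Derivation ℚ A A)
    {k : ℕ} (β : Fin (k + 2) → Bool) (m : Fin (k + 2) → ℤ) : A :=
  if (∀ j, if β j then m j ≤ -1 else -1 ≤ m j) then
    OmK Om D k β (fun j => if β j then (-(m j) - 1).toNat else (m j + 1).toNat)
  else 0

lemma coeff_LamS (n : ℕ) (f : S) :
    PowerSeries.coeff n (LamS f) = Lam (PowerSeries.coeff n f) := by
  simp [LamS, PowerSeries.coeff_map]

lemma constantCoeff_LamS (f : S) :
    PowerSeries.constantCoeff (R := A) (LamS f) = Lam (PowerSeries.constantCoeff (R := A) f) := by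
  rw [← PowerSeries.coeff_zero_eq_constantCoeff, coeff_LamS,
    PowerSeries.coeff_zero_eq_constantCoeff]

lemma Lam_qv (i : ℤ) : Lam (qv i) = qv (i + 1) := by
  simp [Lam, qv, MvPolynomial.rename_X]

lemma Lam_rv (i : ℤ) : Lam (rv i) = rv (i + 1) := by
  simp [Lam, rv, MvPolynomial.rename_X]

lemma rv_ne_zero (i : ℤ) : rv i ≠ 0 := MvPolynomial.X_ne_zero _

/-- The combination `D = D_{+,1} - D_{-,1} - D_{+,0} + D_{-,0}` yields the complexified
Ablowitz–Ladik equation. -/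
theorem complexified_AL_equation (Rm Rp : M2) (hm : IsResMinus Rm) (hp : IsResPlus Rp)
    (D : Bool → ℕ → Derivation ℚ A A)
    (hD : ∀ α p, IsALDeriv Rm Rp α p (D α p)) :
    (D true 1 - D false 1 - D true 0 + D false 0) (rv 0)
        = rv 1 - 2 * rv 0 + rv (-1) - rv 0 * qv 0 * (rv 1 + rv (-1)) ∧
    (D true 1 - D false 1 - D true 0 + D false 0) (qv 0)
        = - qv 1 + 2 * qv 0 - qv (-1) + rv 0 * qv 0 * (qv 1 + qv (-1)) := by
  obtain ⟨hmR, hm0, hmTr, hmDet⟩ := hm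
  obtain ⟨hpR, hp0, hpTr, hpDet⟩ := hp
  -- constant coefficients of Rm
  have m00_0 : constantCoeff (R := A) (Rm 0 0) = 0 := by
    simpa [Matrix.map_apply] using congrFun (congrFun hm0 0) 0
  have m01_0 : constantCoeff (R := A) (Rm 0 1) = rv (-1) := by
    simpa [Matrix.map_apply] using congrFun (congrFun hm0 0) 1
  have m10_0 : constantCoeff (R := A) (Rm 1 0) = 0 := by
    simpa [Matrix.map_apply] using congrFun (congrFun hm0 1) 0
  have m11_0 : constantCoeff (R := A) (Rm 1 1) = 1 := by
    simpa [Matrix.map_apply] using congrFun (congrFun hm0 1) 1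
  -- constant coefficients of Rp
  have p00_0 : constantCoeff (R := A) (Rp 0 0) = 1 := by
    simpa [Matrix.map_apply] using congrFun (congrFun hp0 0) 0
  have p01_0 : constantCoeff (R := A) (Rp 0 1) = 0 := by
    simpa [Matrix.map_apply] using congrFun (congrFun hp0 0) 1
  have p10_0 : constantCoeff (R := A) (Rp 1 0) = qv (-1) := by
    simpa [Matrix.map_apply] using congrFun (congrFun hp0 1) 0
  have p11_0 : constantCoeff (R := A) (Rp 1 1) = 0 := by
    simpa [Matrix.map_apply] using congrFun (congrFun hp0 1) 1
  -- Rm : entry (0,0), coeff 1  →  coeff 1 (Rm 1 0) = qv 0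
  have m10_1 : PowerSeries.coeff 1 (Rm 1 0) = qv 0 := by
    have h := congrArg (PowerSeries.coeff 1) (congrFun (congrFun hmR 0) 0)
    rw [Matrix.mul_apply, Matrix.mul_apply, Fin.sum_univ_two, Fin.sum_univ_two] at h
    simp only [Matrix.map_apply, Umat, Matrix.cons_val_zero, Matrix.cons_val_one,
      Matrix.head_cons, Matrix.cons_val', Matrix.empty_val', Matrix.cons_val_fin_one,
      Matrix.head_fin_const, map_add, coeff_one_mul, PowerSeries.coeff_one_X,
      PowerSeries.constantCoeff_X, PowerSeries.constantCoeff_C, PowerSeries.coeff_C,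
      coeff_LamS, constantCoeff_LamS, map_mul, map_one, map_zero,
      PowerSeries.coeff_one, m00_0, m01_0, Lam_rv] at h
    norm_num at h
    rcases h with h | h
    · exact h.symm
    · exact absurd h (rv_ne_zero 0)
  -- trace and det of Rm at order 1
  have mTr1 : PowerSeries.coeff 1 (Rm 0 0) + PowerSeries.coeff 1 (Rm 1 1) = 0 := by
    have h := congrArg (PowerSeries.coeff 1) hmTr
    simpa [PowerSeries.coeff_one] using h
  have m00_1 : PowerSeries.coeff 1 (Rm 0 0) = rv (-1) * qv 0 := by
    have h := congrArg (PowerSeries.coeff 1) hmDet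
    simp only [map_sub, coeff_one_mul, m00_0, m01_0, m10_0, m11_0, m10_1, map_zero] at h
    linear_combination h
  have m11_1 : PowerSeries.coeff 1 (Rm 1 1) = -(rv (-1) * qv 0) := by
    linear_combination mTr1 - m00_1
  -- Rm : entry (0,1), coeff 1  →  Lam (coeff 1 (Rm 0 1))
  have m01_1L : Lam (PowerSeries.coeff 1 (Rm 0 1))
      = rv (-1) - rv 0 * (rv 0 * qv 1) - rv 0 * (rv (-1) * qv 0) := by
    have h := congrArg (PowerSeries.coeff 1) (congrFun (congrFun hmR 0) 1)
    rw [Matrix.mul_apply, Matrix.mul_apply, Fin.sum_univ_two, Fin.sum_univ_two] at h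
    simp only [Matrix.map_apply, Umat, Matrix.cons_val_zero, Matrix.cons_val_one,
      Matrix.head_cons, Matrix.cons_val', Matrix.empty_val', Matrix.cons_val_fin_one,
      Matrix.head_fin_const, map_add, coeff_one_mul, PowerSeries.coeff_one_X,
      PowerSeries.constantCoeff_X, PowerSeries.constantCoeff_C, PowerSeries.coeff_C,
      coeff_LamS, constantCoeff_LamS, map_mul, map_one, map_zero,
      PowerSeries.coeff_one, mul_one, m00_0, m01_0, m11_1, m00_1, Lam_rv, Lam_qv] at h
    norm_num at h
    linear_combination h
  -- Rp : entry (0,1), coeff 1  →  coeff 1 (Rp 0 1) = rv 0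
  have p01_1 : PowerSeries.coeff 1 (Rp 0 1) = rv 0 := by
    have h := congrArg (PowerSeries.coeff 1) (congrFun (congrFun hpR 0) 1)
    rw [Matrix.mul_apply, Matrix.mul_apply, Fin.sum_univ_two, Fin.sum_univ_two] at h
    simp only [Matrix.map_apply, UmatInf, Matrix.cons_val_zero, Matrix.cons_val_one,
      Matrix.head_cons, Matrix.cons_val', Matrix.empty_val', Matrix.cons_val_fin_one,
      Matrix.head_fin_const, map_add, coeff_one_mul, PowerSeries.coeff_one_X,
      PowerSeries.constantCoeff_X, PowerSeries.constantCoeff_C, PowerSeries.coeff_C,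
      coeff_LamS, constantCoeff_LamS, map_mul, map_one, map_zero,
      PowerSeries.coeff_one, mul_one, one_mul, p00_0, p01_0, p11_0, Lam_rv] at h
    norm_num at h
    linear_combination -h
  -- trace and det of Rp at order 1
  have pTr1 : PowerSeries.coeff 1 (Rp 0 0) + PowerSeries.coeff 1 (Rp 1 1) = 0 := by
    have h := congrArg (PowerSeries.coeff 1) hpTr
    simpa [PowerSeries.coeff_one] using h
  have p11_1 : PowerSeries.coeff 1 (Rp 1 1) = rv 0 * qv (-1) := by
    have h := congrArg (PowerSeries.coeff 1) hpDet
    simp only [map_sub, coeff_one_mul, p00_0, p01_0, p10_0, p11_0, p01_1, map_zero] at h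
    linear_combination h
  have p00_1 : PowerSeries.coeff 1 (Rp 0 0) = -(rv 0 * qv (-1)) := by
    linear_combination pTr1 - p11_1
  -- Rp : entry (1,0), coeff 1  →  Lam (coeff 1 (Rp 1 0))
  have p10_1L : Lam (PowerSeries.coeff 1 (Rp 1 0))
      = qv (-1) - qv 0 * (rv 0 * qv (-1)) - qv 0 * (rv 1 * qv 0) := by
    have h := congrArg (PowerSeries.coeff 1) (congrFun (congrFun hpR 1) 0)
    rw [Matrix.mul_apply, Matrix.mul_apply, Fin.sum_univ_two, Fin.sum_univ_two] at h
    simp only [Matrix.map_apply, UmatInf, Matrix.cons_val_zero, Matrix.cons_val_one,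
      Matrix.head_cons, Matrix.cons_val', Matrix.empty_val', Matrix.cons_val_fin_one,
      Matrix.head_fin_const, map_add, coeff_one_mul, PowerSeries.coeff_one_X,
      PowerSeries.constantCoeff_X, PowerSeries.constantCoeff_C, PowerSeries.coeff_C,
      coeff_LamS, constantCoeff_LamS, map_mul, map_one, map_zero,
      PowerSeries.coeff_one, mul_one, one_mul, p00_1, p10_0, p11_1, Lam_rv, Lam_qv] at h
    norm_num at h
    linear_combination h
  -- the derivations on generators
  obtain ⟨ht1r, ht1q⟩ : GenEqs Rm Rp true 1 (D true 1) := (hD true 1).2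
  obtain ⟨hf1r, hf1q⟩ : GenEqs Rm Rp false 1 (D false 1) := (hD false 1).2
  obtain ⟨ht0r, ht0q⟩ : GenEqs Rm Rp true 0 (D true 0) := (hD true 0).2
  obtain ⟨hf0r, hf0q⟩ : GenEqs Rm Rp false 0 (D false 0) := (hD false 0).2
  simp only [aC, bC, cC, coefM, Matrix.of_apply, if_true, if_pos rfl] at ht1r ht1q hf1r hf1q ht0r ht0q hf0r hf0q
  norm_num [m00_1, m01_0, m10_0, m00_0, p00_0, p01_0, p10_0, p00_1, p01_1, m10_1,
    m01_1L, p10_1L, map_sub, map_mul, map_neg, map_one, Lam_rv, Lam_qv,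
    PowerSeries.coeff_zero_eq_constantCoeff] at ht1r ht1q hf1r hf1q ht0r ht0q hf0r hf0q
  constructor
  · simp only [Derivation.add_apply, Derivation.sub_apply, ht1r, hf1r, ht0r, hf0r]
    ring
  · simp only [Derivation.add_apply, Derivation.sub_apply, ht1q, hf1q, ht0q, hf0q]
    ring
end
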